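/- Let ℒ*_q(𝕏) be the class of conditional densities f(y|x) = Σ_{z=1}^{n} [π_z φ_p(x; μ_z, Σ_z) φ_q(y; a_z, C_z)] / [Σ_{ζ=1}^{n} π_ζ φ_p(x; μ_ζ, Σ_ζ)], with n ∈ ℕ, mixing weights π_z > 0 summing to 1, μ_z ∈ ℝ^p, a_z ∈ ℝ^q, and Σ_z, C_z symmetric positive-definite. If f₁ ∈ ℒ*_q(𝕏) and f₂ ∈ ℒ*_r(𝕏), then the pointwise product f₁₂(y|x) = f₁(y_{[1]}|x)·f₂(y_{[2]}|x), where y = (y_{[1]}, y_{[2]}) ∈ ℝ^{q+r}, belongs to ℒ*_{q+r}(𝕏). -/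

import Mathlib

open scoped Matrix BigOperators

/-- The multivariate Gaussian density. -/
noncomputable def gaussPDF {ι : Type*} [Fintype ι] [DecidableEq ι] (μ : ι → ℝ)
    (S : Matrix ι ι ℝ) (x : ι → ℝ) : ℝ :=
  (Real.sqrt ((2 * Real.pi) ^ (Fintype.card ι) * S.det))⁻¹ *
    Real.exp (-(1 / 2) * ((x - μ) ⬝ᵥ (S⁻¹ *ᵥ (x - μ))))

lemma gaussPDF_pos {ι : Type*} [Fintype ι] [DecidableEq ι] {μ : ι → ℝ}
    {S : Matrix ι ι ℝ} (hS : S.PosDef) (x : ι → ℝ) : 0 < gaussPDF μ S x := by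
  apply mul_pos _ (Real.exp_pos _)
  rw [inv_pos]
  apply Real.sqrt_pos.mpr
  exact mul_pos (pow_pos (by positivity) _) hS.det_pos

lemma dot_symm {ι : Type*} [Fintype ι] (A : Matrix ι ι ℝ) (hA : Aᵀ = A) (u v : ι → ℝ) :
    u ⬝ᵥ A *ᵥ v = v ⬝ᵥ A *ᵥ u := by
  rw [Matrix.dotProduct_mulVec, ← Matrix.mulVec_transpose, hA, dotProduct_comm]

lemma quad_split {ι : Type*} [Fintype ι] (A B : Matrix ι ι ℝ) (hA : Aᵀ = A) (hB : Bᵀ = B)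
    (μ ν m x : ι → ℝ) (hm : (A + B) *ᵥ m = A *ᵥ μ + B *ᵥ ν) :
    (x - μ) ⬝ᵥ (A *ᵥ (x - μ)) + (x - ν) ⬝ᵥ (B *ᵥ (x - ν)) =
      (x - m) ⬝ᵥ ((A + B) *ᵥ (x - m)) +
        (μ ⬝ᵥ (A *ᵥ μ) + ν ⬝ᵥ (B *ᵥ ν) - m ⬝ᵥ ((A + B) *ᵥ m)) := by
  have h1 : x ⬝ᵥ (A *ᵥ m) + x ⬝ᵥ (B *ᵥ m) = x ⬝ᵥ (A *ᵥ μ) + x ⬝ᵥ (B *ᵥ ν) := by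
    have := congrArg (fun w => x ⬝ᵥ w) hm
    simpa [Matrix.add_mulVec, dotProduct_add] using this
  simp only [Matrix.mulVec_sub, Matrix.add_mulVec, sub_dotProduct,
    dotProduct_sub, dotProduct_add]
  rw [dot_symm A hA μ x, dot_symm B hB ν x, dot_symm A hA m x, dot_symm B hB m x]
  linear_combination (2:ℝ) * h1

lemma Zpos {ι : Type*} [Fintype ι] [DecidableEq ι] {S : Matrix ι ι ℝ} (hS : S.PosDef) :
    0 < Real.sqrt ((2 * Real.pi) ^ (Fintype.card ι) * S.det) :=
  Real.sqrt_pos.mpr (mul_pos (pow_pos (by positivity) _) hS.det_pos)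

lemma transpose_eq_of_posDef {ι : Type*} [Fintype ι] {S : Matrix ι ι ℝ}
    (hS : S.PosDef) : Sᵀ = S := by
  have := hS.isHermitian
  rw [← Matrix.conjTranspose_eq_transpose_of_trivial]
  exact this

lemma gauss_mul_gauss {ι : Type*} [Fintype ι] [DecidableEq ι] (S T : Matrix ι ι ℝ)
    (hS : S.PosDef) (hT : T.PosDef) (μ ν : ι → ℝ) :
    ∃ (c : ℝ) (m : ι → ℝ) (E : Matrix ι ι ℝ), 0 < c ∧ E.PosDef ∧
      ∀ x, gaussPDF μ S x * gaussPDF ν T x = c * gaussPDF m E x := by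
  set A := S⁻¹ with hAdef
  set B := T⁻¹ with hBdef
  have hA : A.PosDef := hS.inv
  have hB : B.PosDef := hT.inv
  have hAB : (A + B).PosDef := hA.add hB
  set E := (A + B)⁻¹ with hEdef
  have hE : E.PosDef := hAB.inv
  have hdet : IsUnit (A + B).det := hAB.det_pos.ne'.isUnit
  have hEinv : E⁻¹ = A + B := Matrix.nonsing_inv_nonsing_inv _ hdet
  set m := E *ᵥ (A *ᵥ μ + B *ᵥ ν) with hmdef
  have hm : (A + B) *ᵥ m = A *ᵥ μ + B *ᵥ ν := by
    rw [hmdef, Matrix.mulVec_mulVec, hEdef, Matrix.mul_nonsing_inv _ hdet, Matrix.one_mulVec]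
  have hAt : Aᵀ = A := transpose_eq_of_posDef hA
  have hBt : Bᵀ = B := transpose_eq_of_posDef hB
  set k := μ ⬝ᵥ (A *ᵥ μ) + ν ⬝ᵥ (B *ᵥ ν) - m ⬝ᵥ ((A + B) *ᵥ m) with hkdef
  set ZS := Real.sqrt ((2 * Real.pi) ^ (Fintype.card ι) * S.det) with hZS
  set ZT := Real.sqrt ((2 * Real.pi) ^ (Fintype.card ι) * T.det) with hZT
  set ZE := Real.sqrt ((2 * Real.pi) ^ (Fintype.card ι) * E.det) with hZE
  have hZSpos : 0 < ZS := Zpos hS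
  have hZTpos : 0 < ZT := Zpos hT
  have hZEpos : 0 < ZE := Zpos hE
  refine ⟨ZE * Real.exp (-(1 / 2) * k) / (ZS * ZT), m, E, by positivity, hE, fun x => ?_⟩
  have hq := quad_split A B hAt hBt μ ν m x hm
  have hexp : Real.exp (-(1 / 2) * ((x - μ) ⬝ᵥ (A *ᵥ (x - μ)))) *
      Real.exp (-(1 / 2) * ((x - ν) ⬝ᵥ (B *ᵥ (x - ν)))) =
      Real.exp (-(1 / 2) * k) *
        Real.exp (-(1 / 2) * ((x - m) ⬝ᵥ ((A + B) *ᵥ (x - m)))) := by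
    rw [← Real.exp_add, ← Real.exp_add]
    congr 1
    linear_combination (-(1 / 2 : ℝ)) * hq
  simp only [gaussPDF, ← hZS, ← hZT, ← hZE, hEinv, ← hAdef, ← hBdef]
  calc ZS⁻¹ * Real.exp (-(1 / 2) * ((x - μ) ⬝ᵥ (A *ᵥ (x - μ)))) *
        (ZT⁻¹ * Real.exp (-(1 / 2) * ((x - ν) ⬝ᵥ (B *ᵥ (x - ν)))))
      = (ZS⁻¹ * ZT⁻¹) * (Real.exp (-(1 / 2) * ((x - μ) ⬝ᵥ (A *ᵥ (x - μ)))) *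
          Real.exp (-(1 / 2) * ((x - ν) ⬝ᵥ (B *ᵥ (x - ν))))) := by ring
    _ = (ZS⁻¹ * ZT⁻¹) * (Real.exp (-(1 / 2) * k) *
          Real.exp (-(1 / 2) * ((x - m) ⬝ᵥ ((A + B) *ᵥ (x - m))))) := by rw [hexp]
    _ = ZE * Real.exp (-(1 / 2) * k) / (ZS * ZT) *
          (ZE⁻¹ * Real.exp (-(1 / 2) * ((x - m) ⬝ᵥ ((A + B) *ᵥ (x - m))))) := by
        field_simp
lemma dot_comp_symm {q r : ℕ} (w z : Fin q ⊕ Fin r → ℝ) :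
    (w ∘ finSumFinEquiv.symm) ⬝ᵥ (z ∘ finSumFinEquiv.symm) = w ⬝ᵥ z := by
  simp only [dotProduct, Function.comp_apply]
  exact Equiv.sum_comp finSumFinEquiv.symm (fun s => w s * z s)

/-- quadratic form of a block-diag matrix conjugated by `finSumFinEquiv` splits. -/
lemma quad_block {q r : ℕ} (M : Matrix (Fin q) (Fin q) ℝ) (N : Matrix (Fin r) (Fin r) ℝ)
    (v : Fin (q + r) → ℝ) :
    v ⬝ᵥ (((Matrix.fromBlocks M 0 0 N).submatrix finSumFinEquiv.symm finSumFinEquiv.symm) *ᵥ v)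
      = (fun i => v (Fin.castAdd r i)) ⬝ᵥ (M *ᵥ (fun i => v (Fin.castAdd r i)))
        + (fun i => v (Fin.natAdd q i)) ⬝ᵥ (N *ᵥ (fun i => v (Fin.natAdd q i))) := by
  rw [Matrix.submatrix_mulVec_equiv]
  have hv : v = (Sum.elim (fun i => v (Fin.castAdd r i)) (fun i => v (Fin.natAdd q i)))
      ∘ finSumFinEquiv.symm := by
    funext j
    rcases hs : finSumFinEquiv.symm j with i | i <;>
    · rw [(Equiv.symm_apply_eq finSumFinEquiv).mp hs]
      simp
  conv_lhs => rw [hv]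
  have h0 : ((Sum.elim (fun i => v (Fin.castAdd r i)) (fun i => v (Fin.natAdd q i)))
      ∘ ⇑finSumFinEquiv.symm) ∘ ⇑(finSumFinEquiv.symm).symm
      = Sum.elim (fun i => v (Fin.castAdd r i)) (fun i => v (Fin.natAdd q i)) := by
    funext s; simp
  rw [h0, Matrix.fromBlocks_mulVec]
  simp only [Matrix.zero_mulVec, add_zero, zero_add, Sum.elim_comp_inl, Sum.elim_comp_inr]
  rw [dot_comp_symm, sumElim_dotProduct_sumElim]

lemma gauss_block {q r : ℕ} (C : Matrix (Fin q) (Fin q) ℝ) (D : Matrix (Fin r) (Fin r) ℝ)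
    (hC : C.PosDef) (hD : D.PosDef) (a : Fin q → ℝ) (b : Fin r → ℝ) :
    ∃ (ab : Fin (q + r) → ℝ) (CD : Matrix (Fin (q + r)) (Fin (q + r)) ℝ), CD.PosDef ∧
      ∀ y : Fin (q + r) → ℝ,
        gaussPDF a C (fun i => y (Fin.castAdd r i)) * gaussPDF b D (fun i => y (Fin.natAdd q i))
          = gaussPDF ab CD y := by
  set e := (finSumFinEquiv : Fin q ⊕ Fin r ≃ Fin (q + r)) with he
  refine ⟨(Sum.elim a b) ∘ e.symm,
    (Matrix.fromBlocks C 0 0 D).submatrix e.symm e.symm, Matrix.PosDef.of_dotProduct_mulVec_pos ?_ ?_, fun y => ?_⟩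
  · -- Hermitian
    rw [Matrix.IsHermitian, Matrix.conjTranspose_eq_transpose_of_trivial,
      Matrix.transpose_submatrix, Matrix.fromBlocks_transpose,
      transpose_eq_of_posDef hC, transpose_eq_of_posDef hD,
      Matrix.transpose_zero, Matrix.transpose_zero]
  · -- positivity
    intro v hv
    have hstar : star v = v := by funext i; simp
    rw [hstar, quad_block]
    have hne : (fun i => v (Fin.castAdd r i)) ≠ 0 ∨ (fun i => v (Fin.natAdd q i)) ≠ 0 := by
      by_contra h
      push_neg at h
      apply hv
      funext j
      rcases hs : e.symm j with i | i
      · rw [(Equiv.symm_apply_eq e).mp hs]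
        simpa [he] using congrFun h.1 i
      · rw [(Equiv.symm_apply_eq e).mp hs]
        simpa [he] using congrFun h.2 i
    rcases hne with h | h
    · have h1 := hC.dotProduct_mulVec_pos h
      have h2 := hD.posSemidef.dotProduct_mulVec_nonneg (fun i => v (Fin.natAdd q i))
      simp only [star_trivial] at h1 h2
      exact add_pos_of_pos_of_nonneg h1 h2
    · have h1 := hC.posSemidef.dotProduct_mulVec_nonneg (fun i => v (Fin.castAdd r i))
      have h2 := hD.dotProduct_mulVec_pos h
      simp only [star_trivial] at h1 h2
      exact add_pos_of_nonneg_of_pos h1 h2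
  · -- pointwise equality
    have hdetC := hC.det_pos
    have hdetD := hD.det_pos
    have hinv : ((Matrix.fromBlocks C 0 0 D).submatrix e.symm e.symm)⁻¹
        = (Matrix.fromBlocks C⁻¹ 0 0 D⁻¹).submatrix ⇑e.symm ⇑e.symm := by
      apply Matrix.inv_eq_right_inv
      rw [Matrix.submatrix_mul_equiv, Matrix.fromBlocks_multiply]
      simp only [Matrix.mul_nonsing_inv _ hdetC.ne'.isUnit,
        Matrix.mul_nonsing_inv _ hdetD.ne'.isUnit, Matrix.mul_zero, Matrix.zero_mul,
        add_zero, zero_add, Matrix.fromBlocks_one]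
      exact Matrix.submatrix_one_equiv e.symm
    have hdet : ((Matrix.fromBlocks C 0 0 D).submatrix e.symm e.symm).det
        = C.det * D.det := by
      rw [Matrix.det_submatrix_equiv_self, Matrix.det_fromBlocks_zero₂₁]
    have hsub : y - (Sum.elim a b) ∘ e.symm
        = (Sum.elim ((fun i => y (Fin.castAdd r i)) - a) ((fun i => y (Fin.natAdd q i)) - b))
            ∘ e.symm := by
      funext j
      rcases hs : e.symm j with i | i <;>
      · have hj : j = e _ := (Equiv.symm_apply_eq e).mp hs
        subst hj
        simp [he]
    have hquad : (y - (Sum.elim a b) ∘ e.symm) ⬝ᵥ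
        ((((Matrix.fromBlocks C 0 0 D).submatrix e.symm e.symm)⁻¹) *ᵥ
          (y - (Sum.elim a b) ∘ e.symm))
        = ((fun i => y (Fin.castAdd r i)) - a) ⬝ᵥ (C⁻¹ *ᵥ ((fun i => y (Fin.castAdd r i)) - a))
          + ((fun i => y (Fin.natAdd q i)) - b) ⬝ᵥ
              (D⁻¹ *ᵥ ((fun i => y (Fin.natAdd q i)) - b)) := by
      rw [hinv, hsub, Matrix.submatrix_mulVec_equiv]
      have h0 : ((Sum.elim ((fun i => y (Fin.castAdd r i)) - a)
          ((fun i => y (Fin.natAdd q i)) - b)) ∘ ⇑e.symm) ∘ ⇑(e.symm).symm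
          = Sum.elim ((fun i => y (Fin.castAdd r i)) - a)
            ((fun i => y (Fin.natAdd q i)) - b) := by
        funext s; simp
      rw [h0, Matrix.fromBlocks_mulVec]
      simp only [Matrix.zero_mulVec, add_zero, zero_add, Sum.elim_comp_inl, Sum.elim_comp_inr]
      rw [dot_comp_symm, sumElim_dotProduct_sumElim]
    have hZ : Real.sqrt ((2 * Real.pi) ^ (Fintype.card (Fin (q + r))) *
          ((Matrix.fromBlocks C 0 0 D).submatrix e.symm e.symm).det)
        = Real.sqrt ((2 * Real.pi) ^ (Fintype.card (Fin q)) * C.det) *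
          Real.sqrt ((2 * Real.pi) ^ (Fintype.card (Fin r)) * D.det) := by
      rw [hdet, ← Real.sqrt_mul (by positivity)]
      congr 1
      simp only [Fintype.card_fin]
      rw [pow_add]
      ring
    simp only [gaussPDF, hquad, hZ]
    rw [mul_inv, mul_mul_mul_comm, ← Real.exp_add]
    congr 2
    ring

/-- Membership in ℒ*_q(𝕏): Gaussian-gated mixtures of Gaussian experts with
input-independent expert means, where the output index type is `ι` (e.g. `Fin q`). -/
def MemLStar {p : ℕ} (ι : Type*) [Fintype ι] [DecidableEq ι] (𝕏 : Set (Fin p → ℝ))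
    (f : (Fin p → ℝ) → (ι → ℝ) → ℝ) : Prop :=
  ∃ (n : ℕ) (π : Fin n → ℝ) (μ : Fin n → Fin p → ℝ)
    (S : Fin n → Matrix (Fin p) (Fin p) ℝ) (a : Fin n → ι → ℝ)
    (C : Fin n → Matrix ι ι ℝ),
    0 < n ∧ (∀ z, 0 < π z) ∧ (∑ z, π z = 1) ∧ (∀ z, (S z).PosDef) ∧
    (∀ z, (C z).PosDef) ∧
    ∀ x ∈ 𝕏, ∀ y : ι → ℝ,
      f x y = ∑ z, (π z * gaussPDF (μ z) (S z) x * gaussPDF (a z) (C z) y) /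
        (∑ ζ, π ζ * gaussPDF (μ ζ) (S ζ) x)

theorem memLStar_mul {p q r : ℕ} (𝕏 : Set (Fin p → ℝ))
    (f₁ : (Fin p → ℝ) → (Fin q → ℝ) → ℝ) (f₂ : (Fin p → ℝ) → (Fin r → ℝ) → ℝ)
    (h₁ : MemLStar (Fin q) 𝕏 f₁) (h₂ : MemLStar (Fin r) 𝕏 f₂) :
    MemLStar (Fin (q + r)) 𝕏
      (fun x y => f₁ x (fun i => y (Fin.castAdd r i)) *
        f₂ x (fun i => y (Fin.natAdd q i))) := by
  obtain ⟨n, π₁, μ₁, S₁, a₁, C₁, hn, hπ₁, hsum₁, hS₁, hC₁, hf₁⟩ := h₁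
  obtain ⟨m, π₂, μ₂, S₂, a₂, C₂, hm, hπ₂, hsum₂, hS₂, hC₂, hf₂⟩ := h₂
  have H := fun (z : Fin n) (w : Fin m) =>
    gauss_mul_gauss (S₁ z) (S₂ w) (hS₁ z) (hS₂ w) (μ₁ z) (μ₂ w)
  choose c mc Sc hcpos hScpd hceq using H
  have HB := fun (z : Fin n) (w : Fin m) =>
    gauss_block (C₁ z) (C₂ w) (hC₁ z) (hC₂ w) (a₁ z) (a₂ w)
  choose ab CD hCDpd hCDeq using HB
  have hne1 : Nonempty (Fin n) := ⟨⟨0, hn⟩⟩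
  have hne2 : Nonempty (Fin m) := ⟨⟨0, hm⟩⟩
  set T : ℝ := ∑ z, ∑ w, π₁ z * π₂ w * c z w with hT
  have hTpos : 0 < T := by
    apply Finset.sum_pos _ Finset.univ_nonempty
    intro z _
    apply Finset.sum_pos _ Finset.univ_nonempty
    intro w _
    exact mul_pos (mul_pos (hπ₁ z) (hπ₂ w)) (hcpos z w)
  have hsum_eq : ∀ F : Fin n × Fin m → ℝ,
      ∑ k : Fin (n * m), F (finProdFinEquiv.symm k) = ∑ z, ∑ w, F (z, w) := by
    intro F
    rw [Equiv.sum_comp finProdFinEquiv.symm F, Fintype.sum_prod_type]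
  refine ⟨n * m,
    fun k => π₁ (finProdFinEquiv.symm k).1 * π₂ (finProdFinEquiv.symm k).2 *
      c (finProdFinEquiv.symm k).1 (finProdFinEquiv.symm k).2 / T,
    fun k => mc (finProdFinEquiv.symm k).1 (finProdFinEquiv.symm k).2,
    fun k => Sc (finProdFinEquiv.symm k).1 (finProdFinEquiv.symm k).2,
    fun k => ab (finProdFinEquiv.symm k).1 (finProdFinEquiv.symm k).2,
    fun k => CD (finProdFinEquiv.symm k).1 (finProdFinEquiv.symm k).2,
    Nat.mul_pos hn hm, ?_, ?_, ?_, ?_, ?_⟩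
  · intro k
    exact div_pos (mul_pos (mul_pos (hπ₁ _) (hπ₂ _)) (hcpos _ _)) hTpos
  · calc ∑ k : Fin (n * m), π₁ (finProdFinEquiv.symm k).1 * π₂ (finProdFinEquiv.symm k).2 *
          c (finProdFinEquiv.symm k).1 (finProdFinEquiv.symm k).2 / T
        = ∑ z, ∑ w, π₁ z * π₂ w * c z w / T :=
          hsum_eq (fun p => π₁ p.1 * π₂ p.2 * c p.1 p.2 / T)
      _ = 1 := by
          simp_rw [← Finset.sum_div]
          exact div_self hTpos.ne'
  · intro k; exact hScpd _ _
  · intro k; exact hCDpd _ _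
  · intro x hx y
    simp only []
    rw [hf₁ x hx, hf₂ x hx, ← Finset.sum_div, ← Finset.sum_div, ← Finset.sum_div,
      div_mul_div_comm, Finset.sum_mul_sum]
    have hnum : (∑ k : Fin (n * m),
        π₁ (finProdFinEquiv.symm k).1 * π₂ (finProdFinEquiv.symm k).2 *
          c (finProdFinEquiv.symm k).1 (finProdFinEquiv.symm k).2 / T *
          gaussPDF (mc (finProdFinEquiv.symm k).1 (finProdFinEquiv.symm k).2)
            (Sc (finProdFinEquiv.symm k).1 (finProdFinEquiv.symm k).2) x *
          gaussPDF (ab (finProdFinEquiv.symm k).1 (finProdFinEquiv.symm k).2)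
            (CD (finProdFinEquiv.symm k).1 (finProdFinEquiv.symm k).2) y)
        = (∑ z, ∑ w,
            π₁ z * gaussPDF (μ₁ z) (S₁ z) x * gaussPDF (a₁ z) (C₁ z)
              (fun i => y (Fin.castAdd r i)) *
            (π₂ w * gaussPDF (μ₂ w) (S₂ w) x * gaussPDF (a₂ w) (C₂ w)
              (fun i => y (Fin.natAdd q i)))) / T := by
      rw [hsum_eq (fun p => π₁ p.1 * π₂ p.2 * c p.1 p.2 / T *
            gaussPDF (mc p.1 p.2) (Sc p.1 p.2) x * gaussPDF (ab p.1 p.2) (CD p.1 p.2) y)]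
      rw [Finset.sum_div]
      refine Finset.sum_congr rfl fun z _ => ?_
      rw [Finset.sum_div]
      refine Finset.sum_congr rfl fun w _ => ?_
      rw [← hCDeq z w y]
      have := hceq z w x
      set H1 := gaussPDF (a₁ z) (C₁ z) (fun i => y (Fin.castAdd r i))
      set H2 := gaussPDF (a₂ w) (C₂ w) (fun i => y (Fin.natAdd q i))
      linear_combination (-(π₁ z * π₂ w * H1 * H2) / T) * this
    have hden : (∑ k : Fin (n * m),
        π₁ (finProdFinEquiv.symm k).1 * π₂ (finProdFinEquiv.symm k).2 *
          c (finProdFinEquiv.symm k).1 (finProdFinEquiv.symm k).2 / T *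
          gaussPDF (mc (finProdFinEquiv.symm k).1 (finProdFinEquiv.symm k).2)
            (Sc (finProdFinEquiv.symm k).1 (finProdFinEquiv.symm k).2) x)
        = (∑ z, ∑ w,
            π₁ z * gaussPDF (μ₁ z) (S₁ z) x * (π₂ w * gaussPDF (μ₂ w) (S₂ w) x)) / T := by
      rw [hsum_eq (fun p => π₁ p.1 * π₂ p.2 * c p.1 p.2 / T *
            gaussPDF (mc p.1 p.2) (Sc p.1 p.2) x)]
      rw [Finset.sum_div]
      refine Finset.sum_congr rfl fun z _ => ?_
      rw [Finset.sum_div]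
      refine Finset.sum_congr rfl fun w _ => ?_
      linear_combination (-(π₁ z * π₂ w) / T) * hceq z w x
    rw [hnum, hden, div_div_div_comm, div_self hTpos.ne', div_one,
      Finset.sum_mul_sum]
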